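/- Let ψ : Γ → Γ' be a surjective group homomorphism whose kernel K is amenable, meaning that there exists a linear functional m on the real vector space of bounded functions f : K → ℝ such that m(1) = 1, m(f) ≥ 0 whenever f ≥ 0 pointwise, and m(k·f) = m(f) for all k ∈ K and all bounded f, where (k·f)(x) = f(k⁻¹x). Then for every n ≥ 1 the induced map ψ^* : H^n_b(Γ') → H^n_b(Γ) carries N^n_0(Γ') into N^n_0(Γ) and restricts to an injection N^n_0(Γ') ↪ N^n_0(Γ). -/

import Mathlib

set_option linter.unusedSectionVars false
set_option linter.unusedVariables false

open scoped ENNReal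

namespace BddCoh

variable (G : Type*) [Group G]

/-- Homogeneous real `n`-cochains on `G`: functions `G^{n+1} → ℝ`. -/
abbrev Cochain (n : ℕ) : Type _ := (Fin (n + 1) → G) → ℝ

variable {G}

/-- Invariance of a homogeneous cochain under the diagonal left translation action. -/
def IsInvariant {n : ℕ} (φ : Cochain G n) : Prop :=
  ∀ (g : G) (x : Fin (n + 1) → G), φ (fun i => g * x i) = φ x

/-- Boundedness of a cochain. -/
def IsBoundedC {n : ℕ} (φ : Cochain G n) : Prop :=
  ∃ C : ℝ, ∀ x, |φ x| ≤ C

/-- The sup-norm of a cochain, valued in `[0,∞]`. -/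
noncomputable def snorm {n : ℕ} (φ : Cochain G n) : ℝ≥0∞ :=
  ⨆ x : Fin (n + 1) → G, ENNReal.ofReal |φ x|

/-- The homogeneous differential. -/
noncomputable def delta {n : ℕ} : Cochain G n →ₗ[ℝ] Cochain G (n + 1) where
  toFun φ := fun x => ∑ i : Fin (n + 2), (-1 : ℝ) ^ (i : ℕ) * φ (fun j => x (i.succAbove j))
  map_add' φ ψ := by
    funext x
    simp [mul_add, Finset.sum_add_distrib]
  map_smul' c φ := by
    funext x
    simp only [Pi.smul_apply, smul_eq_mul, RingHom.id_apply]
    rw [Finset.mul_sum]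
    exact Finset.sum_congr rfl fun i _ => by ring

lemma IsInvariant.add {n : ℕ} {φ ψ : Cochain G n} (h1 : IsInvariant φ) (h2 : IsInvariant ψ) :
    IsInvariant (φ + ψ) := fun g x => by
  simp only [Pi.add_apply, h1 g x, h2 g x]

lemma IsInvariant.smul {n : ℕ} (c : ℝ) {φ : Cochain G n} (h : IsInvariant φ) :
    IsInvariant (c • φ) := fun g x => by
  simp only [Pi.smul_apply, h g x]

lemma IsInvariant.zero {n : ℕ} : IsInvariant (0 : Cochain G n) := fun _ _ => rfl

lemma IsBoundedC.add {n : ℕ} {φ ψ : Cochain G n} : IsBoundedC φ → IsBoundedC ψ →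
    IsBoundedC (φ + ψ)
  | ⟨C, hC⟩, ⟨D, hD⟩ => ⟨C + D, fun x => (abs_add_le (φ x) (ψ x)).trans (add_le_add (hC x) (hD x))⟩

lemma IsBoundedC.smul {n : ℕ} (c : ℝ) {φ : Cochain G n} : IsBoundedC φ → IsBoundedC (c • φ)
  | ⟨C, hC⟩ => ⟨|c| * C, fun x => by
      have h : |(c • φ) x| = |c| * |φ x| := by
        simp [abs_mul]
      rw [h]
      exact mul_le_mul_of_nonneg_left (hC x) (abs_nonneg c)⟩

lemma IsBoundedC.zero {n : ℕ} : IsBoundedC (0 : Cochain G n) := ⟨0, fun x => by simp⟩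

variable (G)

/-- The bounded invariant cocycles in degree `n`. -/
noncomputable def Zb (n : ℕ) : Submodule ℝ (Cochain G n) where
  carrier := {z | IsBoundedC z ∧ IsInvariant z ∧ delta z = 0}
  add_mem' := by
    rintro a b ⟨hba, hia, hda⟩ ⟨hbb, hib, hdb⟩
    exact ⟨hba.add hbb, hia.add hib, by rw [map_add, hda, hdb, add_zero]⟩
  zero_mem' := ⟨IsBoundedC.zero, IsInvariant.zero, map_zero _⟩
  smul_mem' := by
    rintro c a ⟨hb, hi, hd⟩
    exact ⟨hb.smul c, hi.smul c, by rw [map_smul, hd, smul_zero]⟩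

variable {G}

/-- Being the coboundary of a bounded invariant cochain (with the convention `C^{-1} = 0`). -/
def IsCobdry : ∀ {n : ℕ}, Cochain G n → Prop
  | 0, ψ => ψ = 0
  | n + 1, ψ => ∃ φ : Cochain G n, IsBoundedC φ ∧ IsInvariant φ ∧ delta φ = ψ

lemma IsCobdry.add : ∀ {n : ℕ} {a b : Cochain G n}, IsCobdry a → IsCobdry b → IsCobdry (a + b)
  | 0, a, b, ha, hb => by
      show a + b = 0
      rw [show a = 0 from ha, show b = 0 from hb, add_zero]
  | n + 1, a, b, ⟨φ, h1, h2, h3⟩, ⟨ψ, g1, g2, g3⟩ =>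
      ⟨φ + ψ, h1.add g1, h2.add g2, by rw [map_add, h3, g3]⟩

lemma IsCobdry.smul : ∀ {n : ℕ} (c : ℝ) {a : Cochain G n}, IsCobdry a → IsCobdry (c • a)
  | 0, c, a, ha => by
      show c • a = 0
      rw [show a = 0 from ha, smul_zero]
  | n + 1, c, a, ⟨φ, h1, h2, h3⟩ => ⟨c • φ, h1.smul c, h2.smul c, by rw [map_smul, h3]⟩

lemma IsCobdry.zero : ∀ {n : ℕ}, IsCobdry (0 : Cochain G n)
  | 0 => rfl
  | n + 1 => ⟨0, IsBoundedC.zero, IsInvariant.zero, map_zero _⟩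

variable (G)

/-- The coboundaries, as a submodule of the cocycles. -/
noncomputable def Bb (n : ℕ) : Submodule ℝ (Zb G n) where
  carrier := {z | IsCobdry (z : Cochain G n)}
  add_mem' := by
    intro a b ha hb
    show IsCobdry ((a + b : Zb G n) : Cochain G n)
    rw [Submodule.coe_add]
    exact ha.add hb
  zero_mem' := by
    show IsCobdry ((0 : Zb G n) : Cochain G n)
    rw [ZeroMemClass.coe_zero]
    exact IsCobdry.zero
  smul_mem' := by
    intro c a ha
    show IsCobdry ((c • a : Zb G n) : Cochain G n)
    rw [Submodule.coe_smul]
    exact ha.smul c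

/-- Bounded cohomology of `G` in degree `n` (with trivial real coefficients), computed from
the complex of bounded invariant homogeneous cochains. -/
abbrev Hb (n : ℕ) := Zb G n ⧸ Bb G n

variable {G}

/-- The bounded cohomology class of a bounded invariant cocycle. -/
noncomputable abbrev mkH {n : ℕ} (z : Zb G n) : Hb G n := (Bb G n).mkQ z

lemma mkH_zero {n : ℕ} : mkH (0 : Zb G n) = 0 := map_zero (Bb G n).mkQ

lemma mkH_add {n : ℕ} (y z : Zb G n) : mkH (y + z) = mkH y + mkH z := map_add (Bb G n).mkQ y z

lemma mkH_smul {n : ℕ} (c : ℝ) (z : Zb G n) : mkH (c • z) = c • mkH z :=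
  map_smul (Bb G n).mkQ c z

/-- The Gromov seminorm (canonical `ℓ^∞`-seminorm) on bounded cohomology, in `[0,∞]`. -/
noncomputable def gnorm {n : ℕ} (α : Hb G n) : ℝ≥0∞ :=
  sInf {r | ∃ z : Zb G n, mkH z = α ∧ snorm (z : Cochain G n) = r}

lemma snorm_zero {n : ℕ} : snorm (0 : Cochain G n) = 0 :=
  le_antisymm (iSup_le fun x => by simp) zero_le

lemma snorm_add_le {n : ℕ} (φ ψ : Cochain G n) : snorm (φ + ψ) ≤ snorm φ + snorm ψ := by
  refine iSup_le fun x => ?_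
  calc ENNReal.ofReal |(φ + ψ) x| ≤ ENNReal.ofReal (|φ x| + |ψ x|) :=
        ENNReal.ofReal_le_ofReal (abs_add_le (φ x) (ψ x))
    _ = ENNReal.ofReal |φ x| + ENNReal.ofReal |ψ x| :=
        ENNReal.ofReal_add (abs_nonneg _) (abs_nonneg _)
    _ ≤ snorm φ + snorm ψ :=
        add_le_add (le_iSup (fun x => ENNReal.ofReal |φ x|) x)
          (le_iSup (fun x => ENNReal.ofReal |ψ x|) x)

lemma snorm_smul_le {n : ℕ} (c : ℝ) (φ : Cochain G n) :
    snorm (c • φ) ≤ ENNReal.ofReal |c| * snorm φ := by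
  refine iSup_le fun x => ?_
  have h : |(c • φ) x| = |c| * |φ x| := by simp [abs_mul]
  rw [h, ENNReal.ofReal_mul (abs_nonneg c)]
  exact mul_le_mul_right (le_iSup (fun x => ENNReal.ofReal |φ x|) x) _

lemma gnorm_le_snorm {n : ℕ} (z : Zb G n) : gnorm (mkH z) ≤ snorm (z : Cochain G n) :=
  sInf_le ⟨z, rfl, rfl⟩

lemma gnorm_zero {n : ℕ} : gnorm (0 : Hb G n) = 0 := by
  refine le_antisymm ?_ zero_le
  have h := gnorm_le_snorm (0 : Zb G n)
  rw [mkH_zero] at h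
  simpa [snorm_zero] using h

lemma exists_gnorm_rep {n : ℕ} {α : Hb G n} (h : gnorm α = 0) {ε : ℝ≥0∞} (hε : 0 < ε) :
    ∃ z : Zb G n, mkH z = α ∧ snorm (z : Cochain G n) < ε := by
  have h2 : gnorm α < ε := by rw [h]; exact hε
  rw [gnorm] at h2
  obtain ⟨r, ⟨z, hz, hr⟩, hlt⟩ := sInf_lt_iff.mp h2
  exact ⟨z, hz, hr ▸ hlt⟩

variable (G)

/-- The subspace of classes with vanishing Gromov seminorm. -/
noncomputable def NG (n : ℕ) : Submodule ℝ (Hb G n) where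
  carrier := {α | gnorm α = 0}
  zero_mem' := gnorm_zero
  add_mem' := by
    intro a b ha hb
    show gnorm (a + b) = 0
    refine le_antisymm ?_ zero_le
    refine ENNReal.le_of_forall_pos_le_add fun ε hε _ => ?_
    have hε2 : (0 : ℝ≥0∞) < (ε : ℝ≥0∞) / 2 :=
      ENNReal.half_pos (by exact_mod_cast hε.ne')
    obtain ⟨z₁, h₁, s₁⟩ := exists_gnorm_rep ha hε2
    obtain ⟨z₂, h₂, s₂⟩ := exists_gnorm_rep hb hε2
    have hmk : mkH (z₁ + z₂) = a + b := by rw [mkH_add, h₁, h₂]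
    calc gnorm (a + b) ≤ snorm ((z₁ + z₂ : Zb G n) : Cochain G n) := hmk ▸ gnorm_le_snorm _
      _ = snorm ((z₁ : Cochain G n) + (z₂ : Cochain G n)) := by rw [Submodule.coe_add]
      _ ≤ snorm (z₁ : Cochain G n) + snorm (z₂ : Cochain G n) := snorm_add_le _ _
      _ ≤ (ε : ℝ≥0∞) / 2 + (ε : ℝ≥0∞) / 2 := add_le_add s₁.le s₂.le
      _ = (ε : ℝ≥0∞) := ENNReal.add_halves _
      _ ≤ 0 + ε := by rw [zero_add]
  smul_mem' := by
    intro c a ha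
    show gnorm (c • a) = 0
    by_cases hc : c = 0
    · subst hc
      rw [zero_smul]
      exact gnorm_zero
    refine le_antisymm ?_ zero_le
    refine ENNReal.le_of_forall_pos_le_add fun ε hε _ => ?_
    have hM0 : ENNReal.ofReal |c| ≠ 0 := by
      rw [Ne, ENNReal.ofReal_eq_zero, not_le]
      exact abs_pos.mpr hc
    have hMt : ENNReal.ofReal |c| ≠ ⊤ := ENNReal.ofReal_ne_top
    have hδ : (0 : ℝ≥0∞) < (ε : ℝ≥0∞) / ENNReal.ofReal |c| :=
      ENNReal.div_pos (by exact_mod_cast hε.ne') hMt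
    obtain ⟨z, hz, hs⟩ := exists_gnorm_rep ha hδ
    have hmk : mkH (c • z) = c • a := by rw [mkH_smul, hz]
    calc gnorm (c • a) ≤ snorm ((c • z : Zb G n) : Cochain G n) := hmk ▸ gnorm_le_snorm _
      _ = snorm (c • (z : Cochain G n)) := by rw [Submodule.coe_smul]
      _ ≤ ENNReal.ofReal |c| * snorm (z : Cochain G n) := snorm_smul_le c _
      _ ≤ ENNReal.ofReal |c| * ((ε : ℝ≥0∞) / ENNReal.ofReal |c|) := mul_le_mul_right hs.le _
      _ = (ε : ℝ≥0∞) := ENNReal.mul_div_cancel hM0 hMt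
      _ ≤ 0 + ε := by rw [zero_add]

variable {G}

/-- Having an invariant (possibly unbounded) primitive (with the convention `C^{-1} = 0`). -/
def HasInvPrimitive : ∀ {n : ℕ}, Cochain G n → Prop
  | 0, ψ => ψ = 0
  | n + 1, ψ => ∃ φ : Cochain G n, IsInvariant φ ∧ delta φ = ψ

/-- A bounded cohomology class is exact if it lies in the kernel of the comparison map, i.e. if
it is represented by the coboundary of an invariant (possibly unbounded) cochain. -/
def IsExact {n : ℕ} (α : Hb G n) : Prop :=
  ∃ z : Zb G n, mkH z = α ∧ HasInvPrimitive (z : Cochain G n)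

/-- Values `‖δφ‖_∞` over invariant primitives `φ` of representatives of `α` vanishing on
`S^{n}` (with the convention `C^{-1} = 0` in degree `0`). -/
def bahSet : ∀ {n : ℕ}, Set G → Hb G n → Set ℝ≥0∞
  | 0, _, α => {r | α = 0 ∧ r = 0}
  | n + 1, S, α =>
      {r | ∃ φ : Cochain G n, IsInvariant φ ∧
        (∀ x : Fin (n + 1) → G, (∀ i, x i ∈ S) → φ x = 0) ∧
        (∃ z : Zb G (n + 1), (z : Cochain G (n + 1)) = delta φ ∧ mkH z = α) ∧
        snorm (delta φ) = r}

/-- The seminorm `‖α‖_S`. -/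
noncomputable def normS {n : ℕ} (S : Set G) (α : Hb G n) : ℝ≥0∞ :=
  sInf (bahSet S α)

/-- The seminorm `‖α‖_bah = sup_S ‖α‖_S`, the supremum running over all finite `S ⊆ G`. -/
noncomputable def bah {n : ℕ} (α : Hb G n) : ℝ≥0∞ :=
  ⨆ S : Finset G, normS (S : Set G) α

lemma normS_le {n : ℕ} {S : Set G} {α : Hb G (n + 1)} {φ : Cochain G n}
    (h1 : IsInvariant φ) (h2 : ∀ x : Fin (n + 1) → G, (∀ i, x i ∈ S) → φ x = 0)
    (h3 : ∃ z : Zb G (n + 1), (z : Cochain G (n + 1)) = delta φ ∧ mkH z = α) :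
    normS S α ≤ snorm (delta φ) :=
  sInf_le ⟨φ, h1, h2, h3, rfl⟩

lemma normS_le_bah {n : ℕ} (S : Finset G) (α : Hb G n) : normS (S : Set G) α ≤ bah α :=
  le_iSup (fun S : Finset G => normS (S : Set G) α) S

lemma bah_zero : ∀ {n : ℕ}, bah (0 : Hb G n) = 0 := by
  intro n
  refine le_antisymm (iSup_le fun S => ?_) zero_le
  cases n with
  | zero =>
      refine le_trans (sInf_le ?_) le_rfl
      exact ⟨rfl, rfl⟩
  | succ n =>
      have h := normS_le (α := (0 : Hb G (n + 1))) (S := (S : Set G))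
        (φ := (0 : Cochain G n)) IsInvariant.zero (fun x _ => rfl)
        ⟨0, by rw [ZeroMemClass.coe_zero, map_zero], map_zero _⟩
      rw [map_zero, snorm_zero] at h
      exact h

lemma eq_zero_of_bah_zero₀ {α : Hb G 0} (h : bah α = 0) : α = 0 := by
  by_contra hα
  have hS : normS ((∅ : Finset G) : Set G) α = ⊤ := by
    rw [normS]
    rw [sInf_eq_top]
    intro r hr
    simp only [bahSet, Set.mem_setOf_eq] at hr
    exact absurd hr.1 hα
  have := normS_le_bah (∅ : Finset G) α
  rw [hS, h] at this
  exact absurd (top_le_iff.mp this).symm (by simp)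

lemma normS_eq_zero_of_bah {n : ℕ} {α : Hb G n} (h : bah α = 0) (S : Finset G) :
    normS (S : Set G) α = 0 :=
  le_antisymm (h ▸ normS_le_bah S α) zero_le

lemma exists_bah_rep {n : ℕ} {α : Hb G (n + 1)} (h : bah α = 0) (S : Finset G)
    {ε : ℝ≥0∞} (hε : 0 < ε) :
    ∃ φ : Cochain G n, IsInvariant φ ∧
      (∀ x : Fin (n + 1) → G, (∀ i, x i ∈ (S : Set G)) → φ x = 0) ∧
      (∃ z : Zb G (n + 1), (z : Cochain G (n + 1)) = delta φ ∧ mkH z = α) ∧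
      snorm (delta φ) < ε := by
  have h2 : normS ((S : Set G)) α < ε := by
    rw [normS_eq_zero_of_bah h S]; exact hε
  rw [normS] at h2
  obtain ⟨r, hr, hlt⟩ := sInf_lt_iff.mp h2
  obtain ⟨φ, h1, h2', h3, h4⟩ := hr
  exact ⟨φ, h1, h2', h3, h4 ▸ hlt⟩

variable (G)

/-- The subspace `N^n_0` of exact classes with vanishing `‖·‖_bah`-seminorm. -/
noncomputable def N0 (n : ℕ) : Submodule ℝ (Hb G n) where
  carrier := {α | bah α = 0}
  zero_mem' := bah_zero
  add_mem' := by
    intro a b ha hb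
    show bah (a + b) = 0
    cases n with
    | zero =>
        rw [eq_zero_of_bah_zero₀ ha, eq_zero_of_bah_zero₀ hb, add_zero]
        exact bah_zero
    | succ n =>
        refine le_antisymm (iSup_le fun S => ?_) zero_le
        refine ENNReal.le_of_forall_pos_le_add fun ε hε _ => ?_
        have hε2 : (0 : ℝ≥0∞) < (ε : ℝ≥0∞) / 2 :=
          ENNReal.half_pos (by exact_mod_cast hε.ne')
        obtain ⟨φ₁, i₁, v₁, ⟨z₁, hz₁, hm₁⟩, s₁⟩ := exists_bah_rep ha S hε2
        obtain ⟨φ₂, i₂, v₂, ⟨z₂, hz₂, hm₂⟩, s₂⟩ := exists_bah_rep hb S hε2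
        have hsum : normS (S : Set G) (a + b) ≤ snorm (delta (φ₁ + φ₂)) := by
          refine normS_le (i₁.add i₂) (fun x hx => ?_) ⟨z₁ + z₂, ?_, ?_⟩
          · simp only [Pi.add_apply, v₁ x hx, v₂ x hx, add_zero]
          · rw [Submodule.coe_add, hz₁, hz₂, map_add]
          · rw [mkH_add, hm₁, hm₂]
        refine hsum.trans ?_
        calc snorm (delta (φ₁ + φ₂)) = snorm (delta φ₁ + delta φ₂) := by rw [map_add]
          _ ≤ snorm (delta φ₁) + snorm (delta φ₂) := snorm_add_le _ _
          _ ≤ (ε : ℝ≥0∞) / 2 + (ε : ℝ≥0∞) / 2 := add_le_add s₁.le s₂.le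
          _ = (ε : ℝ≥0∞) := ENNReal.add_halves _
          _ ≤ 0 + ε := by rw [zero_add]
  smul_mem' := by
    intro c a ha
    show bah (c • a) = 0
    by_cases hc : c = 0
    · subst hc
      rw [zero_smul]
      exact bah_zero
    cases n with
    | zero =>
        rw [eq_zero_of_bah_zero₀ ha, smul_zero]
        exact bah_zero
    | succ n =>
        refine le_antisymm (iSup_le fun S => ?_) zero_le
        refine ENNReal.le_of_forall_pos_le_add fun ε hε _ => ?_
        have hM0 : ENNReal.ofReal |c| ≠ 0 := by
          rw [Ne, ENNReal.ofReal_eq_zero, not_le]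
          exact abs_pos.mpr hc
        have hMt : ENNReal.ofReal |c| ≠ ⊤ := ENNReal.ofReal_ne_top
        have hδ : (0 : ℝ≥0∞) < (ε : ℝ≥0∞) / ENNReal.ofReal |c| :=
          ENNReal.div_pos (by exact_mod_cast hε.ne') hMt
        obtain ⟨φ, hi, hv, ⟨z, hz, hm⟩, hs⟩ := exists_bah_rep ha S hδ
        have hle : normS (S : Set G) (c • a) ≤ snorm (delta (c • φ)) := by
          refine normS_le (hi.smul c) (fun x hx => ?_) ⟨c • z, ?_, ?_⟩
          · simp only [Pi.smul_apply, hv x hx, smul_zero]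
          · rw [Submodule.coe_smul, hz, map_smul]
          · rw [mkH_smul, hm]
        refine hle.trans ?_
        calc snorm (delta (c • φ)) = snorm (c • delta φ) := by rw [map_smul]
          _ ≤ ENNReal.ofReal |c| * snorm (delta φ) := snorm_smul_le c _
          _ ≤ ENNReal.ofReal |c| * ((ε : ℝ≥0∞) / ENNReal.ofReal |c|) :=
              mul_le_mul_right hs.le _
          _ = (ε : ℝ≥0∞) := ENNReal.mul_div_cancel hM0 hMt
          _ ≤ 0 + ε := by rw [zero_add]

variable {G}
variable {G' : Type*} [Group G']

/-- Pullback of cochains along a group homomorphism. -/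
def pull (ψ : G →* G') {n : ℕ} (φ : Cochain G' n) : Cochain G n :=
  fun x => φ fun i => ψ (x i)

lemma delta_pull (ψ : G →* G') {n : ℕ} (φ : Cochain G' n) :
    delta (pull ψ φ) = pull ψ (delta φ) := rfl

lemma IsBoundedC.pull {ψ : G →* G'} {n : ℕ} {φ : Cochain G' n} :
    IsBoundedC φ → IsBoundedC (BddCoh.pull ψ φ)
  | ⟨C, hC⟩ => ⟨C, fun x => hC _⟩

lemma IsInvariant.pull {ψ : G →* G'} {n : ℕ} {φ : Cochain G' n} (h : IsInvariant φ) :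
    IsInvariant (BddCoh.pull ψ φ) := by
  intro g x
  show φ (fun i => ψ (g * x i)) = φ (fun i => ψ (x i))
  have he : (fun i => ψ (g * x i)) = fun i => ψ g * ψ (x i) :=
    funext fun i => map_mul ψ _ _
  rw [he]
  exact h (ψ g) _

/-- Pullback on bounded invariant cocycles. -/
noncomputable def pullZ (ψ : G →* G') (n : ℕ) : Zb G' n →ₗ[ℝ] Zb G n where
  toFun z := ⟨pull ψ (z : Cochain G' n), by
    obtain ⟨hb, hi, hd⟩ := z.2
    refine ⟨hb.pull, hi.pull, ?_⟩
    rw [delta_pull, hd]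
    rfl⟩
  map_add' z w := Subtype.ext rfl
  map_smul' c z := Subtype.ext rfl

lemma pullZ_mem_Bb (ψ : G →* G') :
    ∀ {n : ℕ} (z : Zb G' n), z ∈ Bb G' n → pullZ ψ n z ∈ Bb G n
  | 0, z, hz => by
      show pull ψ (z : Cochain G' 0) = 0
      rw [show (z : Cochain G' 0) = 0 from hz]
      rfl
  | n + 1, z, ⟨φ, h1, h2, h3⟩ =>
      ⟨pull ψ φ, h1.pull, h2.pull, by rw [delta_pull, h3]; rfl⟩

/-- The map induced on bounded cohomology by a group homomorphism. -/
noncomputable def Hbpull (ψ : G →* G') (n : ℕ) : Hb G' n →ₗ[ℝ] Hb G n :=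
  Submodule.mapQ (Bb G' n) (Bb G n) (pullZ ψ n) fun z hz => pullZ_mem_Bb ψ z hz


/-- The bounded real-valued functions on a type, as a submodule of all functions. -/
def BddFun (K : Type*) : Submodule ℝ (K → ℝ) where
  carrier := {f | ∃ C : ℝ, ∀ x, |f x| ≤ C}
  add_mem' := by
    rintro f g ⟨C, hC⟩ ⟨D, hD⟩
    exact ⟨C + D, fun x => (abs_add_le (f x) (g x)).trans (add_le_add (hC x) (hD x))⟩
  zero_mem' := ⟨0, fun x => by simp⟩
  smul_mem' := by
    rintro c f ⟨C, hC⟩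
    refine ⟨|c| * C, fun x => ?_⟩
    have h : |(c • f) x| = |c| * |f x| := by simp [abs_mul]
    rw [h]
    exact mul_le_mul_of_nonneg_left (hC x) (abs_nonneg c)

/-- A group `K` is amenable: there is a normalized, positive, left-invariant linear functional
(an invariant mean) on the space of bounded real functions on `K`. -/
def IsAmenable (K : Type*) [Group K] : Prop :=
  ∃ m : BddFun K →ₗ[ℝ] ℝ,
    (∀ h1 : (fun _ : K => (1 : ℝ)) ∈ BddFun K, m ⟨fun _ => 1, h1⟩ = 1) ∧
    (∀ f : BddFun K, (∀ x, 0 ≤ (f : K → ℝ) x) → 0 ≤ m f) ∧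
    (∀ (k : K) (f : BddFun K) (hf : (fun x => (f : K → ℝ) (k⁻¹ * x)) ∈ BddFun K),
      m ⟨fun x => (f : K → ℝ) (k⁻¹ * x), hf⟩ = m f)

section Mean
variable {K : Type*} [Group K]

lemma mem_bddFun {f : K → ℝ} {C : ℝ} (h : ∀ x, |f x| ≤ C) : f ∈ BddFun K := ⟨C, h⟩

open scoped Classical in
noncomputable def mu (mm : BddFun K →ₗ[ℝ] ℝ) (f : K → ℝ) : ℝ :=
  if h : f ∈ BddFun K then mm ⟨f, h⟩ else 0

variable (mm : BddFun K →ₗ[ℝ] ℝ)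
variable (hone : ∀ h1 : (fun _ : K => (1 : ℝ)) ∈ BddFun K, mm ⟨fun _ => 1, h1⟩ = 1)
variable (hpos : ∀ f : BddFun K, (∀ x, 0 ≤ (f : K → ℝ) x) → 0 ≤ mm f)
variable (hinv : ∀ (k : K) (f : BddFun K) (hf : (fun x => (f : K → ℝ) (k⁻¹ * x)) ∈ BddFun K),
      mm ⟨fun x => (f : K → ℝ) (k⁻¹ * x), hf⟩ = mm f)

include hone hpos hinv

lemma mu_const (c : ℝ) : mu mm (fun _ : K => c) = c := by
  have h1 : (fun _ : K => (1 : ℝ)) ∈ BddFun K := ⟨1, fun x => by simp⟩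
  have hc : (fun _ : K => c) ∈ BddFun K := ⟨|c|, fun x => le_refl _⟩
  rw [mu, dif_pos hc]
  have e : (⟨fun _ => c, hc⟩ : BddFun K) = c • ⟨fun _ => 1, h1⟩ :=
    Subtype.ext (funext fun x => by simp)
  rw [e, map_smul, hone h1, smul_eq_mul, mul_one]

lemma mu_abs_le {f : K → ℝ} {C : ℝ} (h : ∀ x, |f x| ≤ C) : |mu mm f| ≤ C := by
  have hf := mem_bddFun h
  rw [mu, dif_pos hf]
  have h1 : (fun _ : K => (1 : ℝ)) ∈ BddFun K := ⟨1, fun x => by simp⟩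
  have hm1 : mm ⟨fun _ => 1, h1⟩ = 1 := hone h1
  have p1 : 0 ≤ mm (C • ⟨fun _ => 1, h1⟩ - ⟨f, hf⟩) := by
    refine hpos _ fun x => ?_
    have hx := abs_le.mp (h x)
    have : ((C • (⟨fun _ => 1, h1⟩ : BddFun K) - ⟨f, hf⟩ : BddFun K) : K → ℝ) x
        = C * 1 - f x := rfl
    rw [this]
    linarith [hx.2]
  have p2 : 0 ≤ mm (C • ⟨fun _ => 1, h1⟩ + ⟨f, hf⟩) := by
    refine hpos _ fun x => ?_
    have hx := abs_le.mp (h x)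
    have : ((C • (⟨fun _ => 1, h1⟩ : BddFun K) + ⟨f, hf⟩ : BddFun K) : K → ℝ) x
        = C * 1 + f x := rfl
    rw [this]
    linarith [hx.1]
  rw [map_sub, map_smul, hm1, smul_eq_mul, mul_one] at p1
  rw [map_add, map_smul, hm1, smul_eq_mul, mul_one] at p2
  exact abs_le.mpr ⟨by linarith, by linarith⟩

lemma mu_add {f g : K → ℝ} (hf : f ∈ BddFun K) (hg : g ∈ BddFun K) :
    mu mm (fun x => f x + g x) = mu mm f + mu mm g := by
  have hfg : (fun x => f x + g x) ∈ BddFun K := (BddFun K).add_mem hf hg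
  rw [mu, mu, mu, dif_pos hfg, dif_pos hf, dif_pos hg]
  have e : (⟨fun x => f x + g x, hfg⟩ : BddFun K) = ⟨f, hf⟩ + ⟨g, hg⟩ := Subtype.ext rfl
  rw [e, map_add]

lemma mu_smul (c : ℝ) {f : K → ℝ} (hf : f ∈ BddFun K) :
    mu mm (fun x => c * f x) = c * mu mm f := by
  have hcf : (fun x => c * f x) ∈ BddFun K := (BddFun K).smul_mem c hf
  rw [mu, mu, dif_pos hcf, dif_pos hf]
  have e : (⟨fun x => c * f x, hcf⟩ : BddFun K) = c • ⟨f, hf⟩ := Subtype.ext rfl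
  rw [e, map_smul, smul_eq_mul]

lemma mu_transl {f : K → ℝ} (hf : f ∈ BddFun K) (c : K) :
    mu mm (fun x => f (c * x)) = mu mm f := by
  obtain ⟨C, hC⟩ := id hf
  have hf' : (fun x => f (c * x)) ∈ BddFun K := ⟨C, fun x => hC _⟩
  have h2 : (fun x => f ((c⁻¹)⁻¹ * x)) = fun x => f (c * x) := by rw [inv_inv]
  have hf2 : (fun x => f ((c⁻¹)⁻¹ * x)) ∈ BddFun K := h2 ▸ hf'
  have h3 := hinv c⁻¹ ⟨f, hf⟩ hf2
  rw [mu, mu, dif_pos hf', dif_pos hf]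
  calc mm ⟨fun x => f (c * x), hf'⟩ = mm ⟨fun x => f ((c⁻¹)⁻¹ * x), hf2⟩ := by
        congr 1
        exact Subtype.ext h2.symm
    _ = mm ⟨f, hf⟩ := h3

end Mean

section ItMean
variable {K : Type*} [Group K]

noncomputable def itMean (mm : BddFun K →ₗ[ℝ] ℝ) : ∀ (j : ℕ), ((Fin j → K) → ℝ) → ℝ
  | 0, F => F (fun i => i.elim0)
  | j + 1, F => mu mm (fun k₀ => itMean mm j (fun k => F (Fin.cons k₀ k)))

variable (mm : BddFun K →ₗ[ℝ] ℝ)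
variable (hone : ∀ h1 : (fun _ : K => (1 : ℝ)) ∈ BddFun K, mm ⟨fun _ => 1, h1⟩ = 1)
variable (hpos : ∀ f : BddFun K, (∀ x, 0 ≤ (f : K → ℝ) x) → 0 ≤ mm f)
variable (hinv : ∀ (k : K) (f : BddFun K) (hf : (fun x => (f : K → ℝ) (k⁻¹ * x)) ∈ BddFun K),
      mm ⟨fun x => (f : K → ℝ) (k⁻¹ * x), hf⟩ = mm f)
include hone hpos hinv

lemma itMean_const : ∀ (j : ℕ) (c : ℝ), itMean mm j (fun _ => c) = c
  | 0, c => rfl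
  | j + 1, c => by
      rw [itMean]
      have e : (fun k₀ : K => itMean mm j (fun k => c)) = fun _ : K => c :=
        funext fun k₀ => itMean_const j c
      rw [e, mu_const mm hone hpos hinv]

lemma itMean_abs_le : ∀ (j : ℕ) (F : (Fin j → K) → ℝ) (C : ℝ),
    (∀ x, |F x| ≤ C) → |itMean mm j F| ≤ C
  | 0, F, C, h => h _
  | j + 1, F, C, h => by
      rw [itMean]
      exact mu_abs_le mm hone hpos hinv fun k₀ =>
        itMean_abs_le j (fun k => F (Fin.cons k₀ k)) C fun k => h _

lemma itMean_add : ∀ (j : ℕ) (F G : (Fin j → K) → ℝ) (C D : ℝ),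
    (∀ x, |F x| ≤ C) → (∀ x, |G x| ≤ D) →
    itMean mm j (fun x => F x + G x) = itMean mm j F + itMean mm j G
  | 0, F, G, C, D, hF, hG => rfl
  | j + 1, F, G, C, D, hF, hG => by
      rw [itMean, itMean, itMean]
      have e : (fun k₀ : K => itMean mm j (fun k => F (Fin.cons k₀ k) + G (Fin.cons k₀ k)))
          = fun k₀ => itMean mm j (fun k => F (Fin.cons k₀ k))
              + itMean mm j (fun k => G (Fin.cons k₀ k)) :=
        funext fun k₀ => itMean_add j _ _ C D (fun k => hF _) (fun k => hG _)
      rw [e]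
      exact mu_add mm hone hpos hinv
        (mem_bddFun fun k₀ => itMean_abs_le mm hone hpos hinv j _ C fun k => hF _)
        (mem_bddFun fun k₀ => itMean_abs_le mm hone hpos hinv j _ D fun k => hG _)

lemma itMean_smul : ∀ (j : ℕ) (c : ℝ) (F : (Fin j → K) → ℝ) (C : ℝ),
    (∀ x, |F x| ≤ C) →
    itMean mm j (fun x => c * F x) = c * itMean mm j F
  | 0, c, F, C, hF => rfl
  | j + 1, c, F, C, hF => by
      rw [itMean, itMean]
      have e : (fun k₀ : K => itMean mm j (fun k => c * F (Fin.cons k₀ k)))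
          = fun k₀ => c * itMean mm j (fun k => F (Fin.cons k₀ k)) :=
        funext fun k₀ => itMean_smul j c _ C fun k => hF _
      rw [e]
      exact mu_smul mm hone hpos hinv c
        (mem_bddFun fun k₀ => itMean_abs_le mm hone hpos hinv j _ C fun k => hF _)

lemma itMean_sum {ι : Type*} (j : ℕ) (s : Finset ι) (G : ι → (Fin j → K) → ℝ) (C : ι → ℝ)
    (hG : ∀ i, ∀ x, |G i x| ≤ C i) :
    itMean mm j (fun x => ∑ i ∈ s, G i x) = ∑ i ∈ s, itMean mm j (G i) := by
  classical
  induction s using Finset.induction with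
  | empty => simpa using itMean_const mm hone hpos hinv j 0
  | insert a s ha ih =>
      have e : (fun x => ∑ i ∈ insert a s, G i x)
          = fun x => G a x + ∑ i ∈ s, G i x :=
        funext fun x => Finset.sum_insert ha
      rw [e, itMean_add mm hone hpos hinv j _ _ (C a) (∑ i ∈ s, |C i|)
        (hG a) (fun x => ?_), ih, Finset.sum_insert ha]
      calc |∑ i ∈ s, G i x| ≤ ∑ i ∈ s, |G i x| := Finset.abs_sum_le_sum_abs _ _
        _ ≤ ∑ i ∈ s, |C i| := Finset.sum_le_sum fun i _ =>
            (hG i x).trans (le_abs_self _)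

lemma itMean_transl : ∀ (j : ℕ) (F : (Fin j → K) → ℝ) (C : ℝ),
    (∀ x, |F x| ≤ C) → ∀ (c : Fin j → K),
    itMean mm j (fun k => F (fun i => c i * k i)) = itMean mm j F
  | 0, F, C, hF, c => congrArg F (funext fun i => i.elim0)
  | j + 1, F, C, hF, c => by
      rw [itMean, itMean]
      have e1 : ∀ (k₀ : K) (k : Fin j → K),
          (fun i => c i * (Fin.cons k₀ k : Fin (j+1) → K) i) = (Fin.cons (c 0 * k₀) (fun i => c i.succ * k i) : Fin (j+1) → K) := by
        intro k₀ k
        funext i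
        refine Fin.cases ?_ (fun i' => ?_) i <;> simp
      have e2 : (fun k₀ : K => itMean mm j (fun k => F (fun i => c i * (Fin.cons k₀ k : Fin (j+1) → K) i)))
          = fun k₀ => itMean mm j (fun k => F (Fin.cons (c 0 * k₀) k)) := by
        funext k₀
        have e3 : (fun k : Fin j → K => F (fun i => c i * (Fin.cons k₀ k : Fin (j+1) → K) i))
            = fun k => F (Fin.cons (c 0 * k₀) (fun i => c i.succ * k i)) :=
          funext fun k => congrArg F (e1 k₀ k)
        rw [e3]
        exact itMean_transl j (fun k => F (Fin.cons (c 0 * k₀) k)) C (fun k => hF _)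
          (fun i => c i.succ)
      rw [e2]
      exact mu_transl mm hone hpos hinv
        (mem_bddFun fun k₀ => itMean_abs_le mm hone hpos hinv j _ C fun k => hF _) (c 0)

lemma itMean_succAbove : ∀ (j : ℕ) (F : (Fin j → K) → ℝ) (C : ℝ),
    (∀ x, |F x| ≤ C) → ∀ (i : Fin (j + 1)),
    itMean mm (j + 1) (fun k => F (fun l => k (i.succAbove l))) = itMean mm j F := by
  intro j
  induction j with
  | zero =>
      intro F C hF i
      have hi : i = 0 := Fin.fin_one_eq_zero i
      subst hi
      show mu mm (fun k₀ => itMean mm 0 (fun k : Fin 0 → K =>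
          F (fun l => (Fin.cons k₀ k : Fin 1 → K) ((0 : Fin 1).succAbove l))))
        = F (fun i => i.elim0)
      have e : (fun k₀ : K => itMean mm 0 (fun k : Fin 0 → K =>
          F (fun l => (Fin.cons k₀ k : Fin 1 → K) ((0 : Fin 1).succAbove l))))
          = fun _ : K => F (fun i => i.elim0) :=
        funext fun k₀ => congrArg F (funext fun l => l.elim0)
      rw [e]
      exact mu_const mm hone hpos hinv _
  | succ j ih =>
      intro F C hF i
      refine Fin.cases ?_ (fun i' => ?_) i
      · show mu mm (fun k₀ => itMean mm (j + 1) (fun k =>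
            F (fun l => (Fin.cons k₀ k : Fin (j + 2) → K) ((0 : Fin (j + 2)).succAbove l))))
          = itMean mm (j + 1) F
        have e : (fun k₀ : K => itMean mm (j + 1) (fun k =>
            F (fun l => (Fin.cons k₀ k : Fin (j + 2) → K) ((0 : Fin (j + 2)).succAbove l))))
            = fun _ : K => itMean mm (j + 1) F := by
          funext k₀
          exact congrArg (itMean mm (j + 1)) (funext fun k => congrArg F (funext fun l => by
            simp [Fin.zero_succAbove]))
        rw [e]
        exact mu_const mm hone hpos hinv _
      · show mu mm (fun k₀ => itMean mm (j + 1) (fun k =>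
            F (fun l => (Fin.cons k₀ k : Fin (j + 2) → K) (i'.succ.succAbove l))))
          = mu mm (fun k₀ => itMean mm j (fun k => F (Fin.cons k₀ k)))
        refine congrArg (mu mm) (funext fun k₀ => ?_)
        have e2 : (fun k : Fin (j + 1) → K =>
            F (fun l => (Fin.cons k₀ k : Fin (j + 2) → K) (i'.succ.succAbove l)))
            = fun k => (fun k'' : Fin j → K => F (Fin.cons k₀ k'')) (fun l' => k (i'.succAbove l')) := by
          refine funext fun k => congrArg F (funext fun l => ?_)
          refine Fin.cases ?_ (fun l' => ?_) l
          · simp [Fin.succ_succAbove_zero]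
          · simp [Fin.succ_succAbove_succ]
        rw [e2]
        exact ih (fun k'' => F (Fin.cons k₀ k'')) C (fun k => hF _) i'

end ItMean

lemma snorm_pull_le {G G' : Type*} [Group G] [Group G'] (ψ : G →* G') {n : ℕ}
    (φ : Cochain G' n) : snorm (pull ψ φ) ≤ snorm φ :=
  iSup_le fun x => le_iSup (fun y => ENNReal.ofReal |φ y|) (fun i => ψ (x i))

lemma Hbpull_mkH {G G' : Type*} [Group G] [Group G'] (ψ : G →* G') (n : ℕ) (z : Zb G' n) :
    Hbpull ψ n (mkH z) = mkH (pullZ ψ n z) := by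
  simp [Hbpull, mkH, Submodule.mkQ_apply, Submodule.mapQ_apply]

set_option maxHeartbeats 800000 in
lemma isCobdry_of_pull {Γ Γ' : Type*} [Group Γ] [Group Γ'] (ψ : Γ →* Γ')
    (hsurj : Function.Surjective ψ)
    (mm : BddFun ψ.ker →ₗ[ℝ] ℝ)
    (hone : ∀ h1 : (fun _ : ψ.ker => (1 : ℝ)) ∈ BddFun ψ.ker, mm ⟨fun _ => 1, h1⟩ = 1)
    (hpos : ∀ f : BddFun ψ.ker, (∀ x, 0 ≤ (f : ψ.ker → ℝ) x) → 0 ≤ mm f)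
    (hinv : ∀ (k : ψ.ker) (f : BddFun ψ.ker)
      (hf : (fun x => (f : ψ.ker → ℝ) (k⁻¹ * x)) ∈ BddFun ψ.ker),
      mm ⟨fun x => (f : ψ.ker → ℝ) (k⁻¹ * x), hf⟩ = mm f)
    {m0 : ℕ} (z' : Cochain Γ' (m0 + 1))
    (h : IsCobdry (pull ψ z')) : IsCobdry z' := by
  obtain ⟨φ, ⟨C, hC⟩, hφinv, hφδ⟩ := h
  let s : Γ' → Γ := Function.surjInv hsurj
  have hs : ∀ y, ψ (s y) = y := fun y => Function.surjInv_eq hsurj y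
  refine ⟨fun y => itMean mm (m0 + 1)
      (fun k : Fin (m0 + 1) → ψ.ker => φ (fun i => s (y i) * ((k i : Γ)))), ?_, ?_, ?_⟩
  · exact ⟨C, fun y => itMean_abs_le mm hone hpos hinv _ _ C (fun k => hC _)⟩
  · intro g' y
    have hc : ∀ i : Fin (m0 + 1), (s g' * s (y i))⁻¹ * s (g' * y i) ∈ ψ.ker := by
      intro i
      rw [MonoidHom.mem_ker]
      simp only [map_mul, map_inv, hs]
      group
    set c : Fin (m0 + 1) → ψ.ker := fun i => ⟨_, hc i⟩ with hcdef
    have e1 : ∀ (k : Fin (m0 + 1) → ψ.ker) (i : Fin (m0 + 1)),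
        s (g' * y i) * (k i : Γ) = s g' * (s (y i) * ((c i * k i : ψ.ker) : Γ)) := by
      intro k i
      show s (g' * y i) * (k i : Γ)
        = s g' * (s (y i) * (((s g' * s (y i))⁻¹ * s (g' * y i)) * (k i : Γ)))
      group
    show itMean mm (m0 + 1)
        (fun k : Fin (m0 + 1) → ψ.ker => φ (fun i => s (g' * y i) * (k i : Γ)))
      = itMean mm (m0 + 1)
        (fun k : Fin (m0 + 1) → ψ.ker => φ (fun i => s (y i) * (k i : Γ)))
    have e2 : (fun k : Fin (m0 + 1) → ψ.ker => φ (fun i => s (g' * y i) * (k i : Γ)))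
        = fun k => φ (fun i => s (y i) * ((c i * k i : ψ.ker) : Γ)) := by
      funext k
      rw [show (fun i => s (g' * y i) * (k i : Γ))
          = fun i => s g' * (s (y i) * ((c i * k i : ψ.ker) : Γ)) from funext (e1 k)]
      exact hφinv (s g') _
    rw [e2]
    exact itMean_transl mm hone hpos hinv (m0 + 1)
      (fun k : Fin (m0 + 1) → ψ.ker => φ (fun i => s (y i) * (k i : Γ))) C (fun k => hC _) c
  · funext y
    show (∑ i : Fin (m0 + 2), (-1 : ℝ) ^ (i : ℕ) * itMean mm (m0 + 1)
        (fun k : Fin (m0 + 1) → ψ.ker => φ (fun j => s (y (i.succAbove j)) * (k j : Γ))))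
      = z' y
    set G : Fin (m0 + 2) → (Fin (m0 + 2) → ψ.ker) → ℝ :=
      fun i k => φ (fun j => s (y (i.succAbove j)) * (k (i.succAbove j) : Γ)) with hGdef
    have hGb : ∀ i k, |G i k| ≤ C := fun i k => hC _
    have e1 : ∀ i : Fin (m0 + 2),
        itMean mm (m0 + 1)
          (fun k : Fin (m0 + 1) → ψ.ker => φ (fun j => s (y (i.succAbove j)) * (k j : Γ)))
        = itMean mm (m0 + 2) (G i) := fun i =>
      (itMean_succAbove mm hone hpos hinv (m0 + 1)
        (fun k' : Fin (m0 + 1) → ψ.ker => φ (fun j => s (y (i.succAbove j)) * (k' j : Γ)))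
        C (fun k => hC _) i).symm
    have e2 : ∀ i : Fin (m0 + 2),
        (-1 : ℝ) ^ (i : ℕ) * itMean mm (m0 + 2) (G i)
          = itMean mm (m0 + 2) (fun k => (-1 : ℝ) ^ (i : ℕ) * G i k) := fun i =>
      (itMean_smul mm hone hpos hinv (m0 + 2) _ (G i) C (hGb i)).symm
    have e3 : ∀ k : Fin (m0 + 2) → ψ.ker,
        (∑ i : Fin (m0 + 2), (-1 : ℝ) ^ (i : ℕ) * G i k) = z' y := by
      intro k
      have hd : (∑ i : Fin (m0 + 2), (-1 : ℝ) ^ (i : ℕ) * G i k)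
          = delta φ (fun i => s (y i) * (k i : Γ)) := rfl
      rw [hd, hφδ]
      show z' (fun i => ψ (s (y i) * (k i : Γ))) = z' y
      refine congrArg z' (funext fun i => ?_)
      rw [map_mul, hs]
      have hk : ψ ((k i : Γ)) = 1 := (k i).2
      rw [hk, mul_one]
    calc (∑ i : Fin (m0 + 2), (-1 : ℝ) ^ (i : ℕ) * itMean mm (m0 + 1)
          (fun k : Fin (m0 + 1) → ψ.ker => φ (fun j => s (y (i.succAbove j)) * (k j : Γ))))
        = ∑ i : Fin (m0 + 2), itMean mm (m0 + 2) (fun k => (-1 : ℝ) ^ (i : ℕ) * G i k) := by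
          refine Finset.sum_congr rfl fun i _ => ?_
          rw [e1 i, e2 i]
      _ = itMean mm (m0 + 2) (fun k => ∑ i : Fin (m0 + 2), (-1 : ℝ) ^ (i : ℕ) * G i k) :=
          (itMean_sum mm hone hpos hinv (m0 + 2) (Finset.univ : Finset (Fin (m0 + 2)))
            (fun i k => (-1 : ℝ) ^ (i : ℕ) * G i k) (fun _ => C)
            (fun i x => by
              have : |(-1 : ℝ) ^ (i : ℕ) * G i x| = |G i x| := by
                rw [abs_mul]
                simp
              rw [this]
              exact hGb i x)).symm
      _ = itMean mm (m0 + 2) (fun _ => z' y) :=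
          congrArg (itMean mm (m0 + 2)) (funext e3)
      _ = z' y := itMean_const mm hone hpos hinv _ _

lemma Hbpull_injective {Γ Γ' : Type*} [Group Γ] [Group Γ'] (ψ : Γ →* Γ')
    (hsurj : Function.Surjective ψ) (hamen : IsAmenable ψ.ker) (m0 : ℕ) :
    ∀ γ : Hb Γ' (m0 + 1), Hbpull ψ (m0 + 1) γ = 0 → γ = 0 := by
  obtain ⟨mm, hone, hpos, hinv⟩ := hamen
  intro γ hγ
  obtain ⟨z', rfl⟩ := Submodule.mkQ_surjective (Bb Γ' (m0 + 1)) γ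
  rw [Hbpull_mkH] at hγ
  have hmem : pullZ ψ (m0 + 1) z' ∈ Bb Γ (m0 + 1) := by
    exact (Submodule.Quotient.mk_eq_zero _).mp hγ
  have hcob : IsCobdry (pull ψ (z' : Cochain Γ' (m0 + 1))) := hmem
  have : IsCobdry (z' : Cochain Γ' (m0 + 1)) :=
    isCobdry_of_pull ψ hsurj mm hone hpos hinv _ hcob
  exact (Submodule.Quotient.mk_eq_zero _).mpr this

end BddCoh

open BddCoh

/-- If `ψ : Γ → Γ'` is a surjective homomorphism with amenable kernel, then for every `n ≥ 1`
the induced map in bounded cohomology carries `N^n_0(Γ')` into `N^n_0(Γ)` and restricts to an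
injection `N^n_0(Γ') ↪ N^n_0(Γ)`. -/
theorem N0_inj_of_surj_amenable_ker (Γ Γ' : Type*) [Group Γ] [Group Γ']
    (ψ : Γ →* Γ') (hsurj : Function.Surjective ψ) (hamen : IsAmenable ψ.ker)
    (n : ℕ) (hn : 1 ≤ n) :
    (∀ α ∈ N0 Γ' n, Hbpull ψ n α ∈ N0 Γ n) ∧
      Set.InjOn (Hbpull ψ n) (N0 Γ' n : Set (Hb Γ' n)) := by
  classical
  obtain ⟨m0, rfl⟩ : ∃ m0, n = m0 + 1 := ⟨n - 1, by omega⟩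
  constructor
  · intro α hα
    have hα' : bah α = 0 := hα
    show bah (Hbpull ψ (m0 + 1) α) = 0
    refine le_antisymm (iSup_le fun S => ?_) zero_le
    refine ENNReal.le_of_forall_pos_le_add fun ε hε _ => ?_
    have hεpos : (0 : ℝ≥0∞) < (ε : ℝ≥0∞) := by exact_mod_cast hε
    obtain ⟨φ', hi, hv, ⟨z', hz', hm'⟩, hsn⟩ := exists_bah_rep hα' (S.image ψ) hεpos
    have hle : normS (S : Set Γ) (Hbpull ψ (m0 + 1) α) ≤ snorm (delta (pull ψ φ')) := by
      refine normS_le hi.pull (fun x hx => ?_) ⟨pullZ ψ (m0 + 1) z', ?_, ?_⟩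
      · refine hv (fun i => ψ (x i)) fun i => ?_
        simpa using Finset.mem_image_of_mem ψ (hx i)
      · show pull ψ (z' : Cochain Γ' (m0 + 1)) = delta (pull ψ φ')
        rw [delta_pull, hz']
      · rw [← hm', Hbpull_mkH]
    refine hle.trans ?_
    calc snorm (delta (pull ψ φ')) = snorm (pull ψ (delta φ')) := by rw [delta_pull]
      _ ≤ snorm (delta φ') := snorm_pull_le ψ _
      _ ≤ (ε : ℝ≥0∞) := hsn.le
      _ ≤ 0 + ε := by rw [zero_add]
  · intro a ha b hb hab
    have h0 : Hbpull ψ (m0 + 1) (a - b) = 0 := by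
      rw [map_sub, hab, sub_self]
    have := Hbpull_injective ψ hsurj hamen m0 (a - b) h0
    exact sub_eq_zero.mp this
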